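/- Suppose G ∈ C²([0,T)) satisfies G''(t) + a(t)G'(t) + b(t)G(t) = F(t) with F ≥ 0 continuous, G(0) ≥ 0, and G'(0) + r₂(0)G(0) ≥ 0, where r₁, r₂ ∈ L¹([0,∞)) solve r₁ + r₂ = a and r₂' + r₁ r₂ = b. Then for all t ∈ [0,T), G(t) ≥ e^{−‖r₁‖_{L¹} − ‖r₂‖_{L¹}} ∫₀^t ∫₀^{s₂} F(s₁) ds₁ ds₂. -/
import Mathlib

open Set MeasureTheory intervalIntegral

lemma comp_lemma (c : ℝ) (hc : 0 ≤ c) (r u u' g : ℝ → ℝ)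
    (hr_int : IntegrableOn r (Ici 0))
    (hr_cont : ContinuousOn r (Icc 0 c))
    (hu : ∀ x ∈ Icc (0:ℝ) c, HasDerivWithinAt u (u' x) (Icc 0 c) x)
    (hg_cont : ContinuousOn g (Icc 0 c))
    (hg0 : ∀ x ∈ Icc (0:ℝ) c, 0 ≤ g x)
    (hineq : ∀ x ∈ Icc (0:ℝ) c, g x ≤ u' x + r x * u x)
    (hu0 : 0 ≤ u 0) :
    Real.exp (-∫ τ in Ici (0:ℝ), |r τ|) * ∫ s in (0:ℝ)..c, g s ≤ u c := by
  set K : ℝ := ∫ τ in Ici (0:ℝ), |r τ| with hK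
  set R : ℝ → ℝ := fun x => ∫ s in (0:ℝ)..x, r s with hRdef
  have hsub : ∀ x ∈ Icc (0:ℝ) c, Icc (0:ℝ) x ⊆ Icc (0:ℝ) c := fun x hx =>
    Icc_subset_Icc le_rfl hx.2
  have hR : ∀ x ∈ Icc (0:ℝ) c, HasDerivWithinAt R (r x) (Icc 0 c) x := by
    intro x hx
    haveI := Fact.mk hx
    refine intervalIntegral.integral_hasDerivWithinAt_right (s := Icc 0 c) (t := Icc 0 c)
      ?_ ⟨Icc 0 c, self_mem_nhdsWithin, hr_cont.aestronglyMeasurable measurableSet_Icc⟩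
      (hr_cont x hx)
    exact (hr_cont.mono (by rw [uIcc_of_le hx.1]; exact hsub x hx)).intervalIntegrable
  have hRcont : ContinuousOn R (Icc 0 c) := fun x hx => (hR x hx).continuousWithinAt
  have hφcont : ContinuousOn (fun s => Real.exp (R s) * g s) (Icc 0 c) :=
    (hRcont.rexp).mul hg_cont
  set φ : ℝ → ℝ := fun x => ∫ s in (0:ℝ)..x, Real.exp (R s) * g s with hφdef
  have hφ : ∀ x ∈ Icc (0:ℝ) c, HasDerivWithinAt φ (Real.exp (R x) * g x) (Icc 0 c) x := by
    intro x hx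
    haveI := Fact.mk hx
    refine intervalIntegral.integral_hasDerivWithinAt_right (s := Icc 0 c) (t := Icc 0 c)
      ?_ ⟨Icc 0 c, self_mem_nhdsWithin, hφcont.aestronglyMeasurable measurableSet_Icc⟩
      (hφcont x hx)
    exact (hφcont.mono (by rw [uIcc_of_le hx.1]; exact hsub x hx)).intervalIntegrable
  set ψ : ℝ → ℝ := fun x => Real.exp (R x) * u x - φ x with hψdef
  have hψ : ∀ x ∈ Icc (0:ℝ) c, HasDerivWithinAt ψ
      (Real.exp (R x) * r x * u x + Real.exp (R x) * u' x - Real.exp (R x) * g x) (Icc 0 c) x := by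
    intro x hx
    exact (((hR x hx).exp.mul (hu x hx)).sub (hφ x hx))
  have hmono : MonotoneOn ψ (Icc 0 c) := by
    refine monotoneOn_of_hasDerivWithinAt_nonneg (convex_Icc 0 c)
      (fun x hx => (hψ x hx).continuousWithinAt)
      (fun x hx => ((hψ x (interior_subset hx)).mono interior_subset)) ?_
    intro x hx
    have hx' := interior_subset hx
    have h1 := hineq x hx'
    have h2 := Real.exp_pos (R x)
    nlinarith
  have hψ0 : (0:ℝ) ≤ ψ 0 := by
    simp only [hψdef, hφdef, hRdef, intervalIntegral.integral_same, Real.exp_zero, one_mul,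
      sub_zero]
    exact hu0
  have key : φ c ≤ Real.exp (R c) * u c := by
    have hψ0' : (0:ℝ) ≤ Real.exp (R 0) * u 0 - φ 0 := hψ0
    have := hmono (left_mem_Icc.2 hc) (right_mem_Icc.2 hc) hc
    simp only [hψdef] at this
    linarith
  -- lower bound for φ c
  have hRbound : ∀ s ∈ Icc (0:ℝ) c, R c - K ≤ R s := by
    intro s hs
    have hint1 : IntervalIntegrable r volume 0 s :=
      (hr_cont.mono (by rw [uIcc_of_le hs.1]; exact hsub s hs)).intervalIntegrable
    have hint2 : IntervalIntegrable r volume s c :=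
      (hr_cont.mono (by rw [uIcc_of_le hs.2]; exact Icc_subset_Icc hs.1 le_rfl)).intervalIntegrable
    have hsplit : R s + ∫ x in s..c, r x = R c :=
      intervalIntegral.integral_add_adjacent_intervals hint1 hint2
    have habs : |∫ x in s..c, r x| ≤ ∫ x in s..c, |r x| :=
      intervalIntegral.abs_integral_le_integral_abs hs.2
    have hK2 : (∫ x in s..c, |r x|) ≤ K := by
      rw [intervalIntegral.integral_of_le hs.2, hK]
      refine setIntegral_mono_set hr_int.abs ?_ ?_
      · filter_upwards with x using abs_nonneg _
      · filter_upwards with x hx using le_trans hs.1 (le_of_lt hx.1)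
    have := abs_le.1 habs
    linarith
  have hlow : Real.exp (R c - K) * ∫ s in (0:ℝ)..c, g s ≤ φ c := by
    rw [← intervalIntegral.integral_const_mul]
    refine intervalIntegral.integral_mono_on hc ?_ ?_ ?_
    · refine ContinuousOn.intervalIntegrable ?_
      rw [uIcc_of_le hc]; exact continuousOn_const.mul hg_cont
    · refine ContinuousOn.intervalIntegrable ?_
      rw [uIcc_of_le hc]; exact hφcont
    · intro x hx
      exact mul_le_mul_of_nonneg_right (Real.exp_le_exp.2 (hRbound x hx)) (hg0 x hx)
  have hexp : Real.exp (R c - K) = Real.exp (R c) * Real.exp (-K) := by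
    rw [sub_eq_add_neg, Real.exp_add]
  have hfinal : Real.exp (R c) * (Real.exp (-K) * ∫ s in (0:ℝ)..c, g s) ≤
      Real.exp (R c) * u c := by
    calc Real.exp (R c) * (Real.exp (-K) * ∫ s in (0:ℝ)..c, g s)
        = Real.exp (R c - K) * ∫ s in (0:ℝ)..c, g s := by rw [hexp]; ring
      _ ≤ φ c := hlow
      _ ≤ Real.exp (R c) * u c := key
  exact le_of_mul_le_mul_left hfinal (Real.exp_pos _)
theorem double_multiplier_lower_bound (T : ℝ) (hT : 0 < T)
    (a b r₁ r₂ r₂' F G G' G'' : ℝ → ℝ)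
    (ha : ContDiff ℝ 1 a) (hb : Continuous b)
    (hr₂ : ∀ t : ℝ, 0 ≤ t → HasDerivAt r₂ (r₂' t) t)
    (hsys1 : ∀ t : ℝ, 0 ≤ t → r₁ t + r₂ t = a t)
    (hsys2 : ∀ t : ℝ, 0 ≤ t → r₂' t + r₁ t * r₂ t = b t)
    (hr₁_int : IntegrableOn r₁ (Ici 0))
    (hr₂_int : IntegrableOn r₂ (Ici 0))
    (hF_cont : ContinuousOn F (Ico 0 T)) (hF_nonneg : ∀ t ∈ Ico (0 : ℝ) T, 0 ≤ F t)
    (hG : ∀ t ∈ Ico (0 : ℝ) T, HasDerivWithinAt G (G' t) (Ico 0 T) t)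
    (hG' : ∀ t ∈ Ico (0 : ℝ) T, HasDerivWithinAt G' (G'' t) (Ico 0 T) t)
    (heq : ∀ t ∈ Ico (0 : ℝ) T, G'' t + a t * G' t + b t * G t = F t)
    (hG0 : 0 ≤ G 0) (hG'0 : 0 ≤ G' 0 + r₂ 0 * G 0) :
    ∀ t ∈ Ico (0 : ℝ) T,
      G t ≥ Real.exp (-(∫ τ in Ici (0 : ℝ), |r₁ τ|) - (∫ τ in Ici (0 : ℝ), |r₂ τ|)) *
        ∫ s₂ in (0 : ℝ)..t, ∫ s₁ in (0 : ℝ)..s₂, F s₁ := by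
  intro t ht
  set K₁ : ℝ := ∫ τ in Ici (0:ℝ), |r₁ τ| with hK₁
  set K₂ : ℝ := ∫ τ in Ici (0:ℝ), |r₂ τ| with hK₂
  -- step 1: for every s ∈ Icc 0 t, exp(-K₁) * ∫₀^s F ≤ G' s + r₂ s * G s
  have step1 : ∀ s ∈ Icc (0:ℝ) t, Real.exp (-K₁) * (∫ x in (0:ℝ)..s, F x) ≤
      G' s + r₂ s * G s := by
    intro s hs
    have hsub : Icc (0:ℝ) s ⊆ Ico 0 T := fun x hx =>
      ⟨hx.1, lt_of_le_of_lt (le_trans hx.2 hs.2) ht.2⟩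
    have hr₂cont : ∀ x ∈ Icc (0:ℝ) s, ContinuousWithinAt r₂ (Icc 0 s) x := fun x hx =>
      ((hr₂ x hx.1).continuousAt).continuousWithinAt
    have hr₁cont : ContinuousOn r₁ (Icc 0 s) := by
      refine ContinuousOn.congr (f := fun x => a x - r₂ x) ?_ ?_
      · exact (ha.continuous.continuousOn).sub (fun x hx => hr₂cont x hx)
      · intro x hx
        have := hsys1 x hx.1
        show r₁ x = a x - r₂ x
        linarith
    refine comp_lemma s hs.1 r₁ (fun x => G' x + r₂ x * G x)
      (fun x => G'' x + (r₂' x * G x + r₂ x * G' x)) F hr₁_int hr₁cont ?_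
      (hF_cont.mono hsub) (fun x hx => hF_nonneg x (hsub hx)) ?_ hG'0
    · intro x hx
      exact ((hG' x (hsub hx)).mono hsub).add
        (((hr₂ x hx.1).hasDerivWithinAt).mul ((hG x (hsub hx)).mono hsub))
    · intro x hx
      refine le_of_eq ?_
      have e1 := hsys1 x hx.1
      have e2 := hsys2 x hx.1
      have e3 := heq x (hsub hx)
      linear_combination -e3 - G' x * e1 - G x * e2
  -- step 2
  have hsub : Icc (0:ℝ) t ⊆ Ico 0 T := fun x hx => ⟨hx.1, lt_of_le_of_lt hx.2 ht.2⟩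
  have hHcont : ContinuousOn (fun s => ∫ x in (0:ℝ)..s, F x) (Icc 0 t) := by
    intro x hx
    haveI := Fact.mk hx
    refine (intervalIntegral.integral_hasDerivWithinAt_right (s := Icc 0 t) (t := Icc 0 t)
      ?_ ⟨Icc 0 t, self_mem_nhdsWithin,
        (hF_cont.mono hsub).aestronglyMeasurable measurableSet_Icc⟩
      ((hF_cont.mono hsub) x hx)).continuousWithinAt
    refine ContinuousOn.intervalIntegrable ?_
    rw [uIcc_of_le hx.1]
    exact hF_cont.mono (fun y hy => hsub ⟨hy.1, le_trans hy.2 hx.2⟩)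
  have hHnonneg : ∀ s ∈ Icc (0:ℝ) t, 0 ≤ ∫ x in (0:ℝ)..s, F x := by
    intro s hs
    refine intervalIntegral.integral_nonneg hs.1 ?_
    intro y hy
    exact hF_nonneg y (hsub ⟨hy.1, le_trans hy.2 hs.2⟩)
  have step2 := comp_lemma t ht.1 r₂ G G'
    (fun s => Real.exp (-K₁) * ∫ x in (0:ℝ)..s, F x) hr₂_int
    (fun x hx => ((hr₂ x hx.1).continuousAt).continuousWithinAt)
    (fun x hx => (hG x (hsub hx)).mono hsub)
    (continuousOn_const.mul hHcont)
    (fun x hx => mul_nonneg (Real.exp_pos _).le (hHnonneg x hx))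
    step1 hG0
  rw [intervalIntegral.integral_const_mul] at step2
  have : Real.exp (-K₁ - K₂) * ∫ s₂ in (0:ℝ)..t, ∫ s₁ in (0:ℝ)..s₂, F s₁ =
      Real.exp (-K₂) * (Real.exp (-K₁) * ∫ s₂ in (0:ℝ)..t, ∫ s₁ in (0:ℝ)..s₂, F s₁) := by
    rw [← mul_assoc, ← Real.exp_add]; ring_nf
  rw [ge_iff_le, this]
  exact step2
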